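/- Let $p_n \in (0,1)$ and $c_n > 0$ with $\lim_{n\to\infty} n^2\kappa^{(n)} = \kappa > 0$ where $\kappa^{(n)} = \frac{1+c_n - 2\sqrt{p_n(1-p_n)}}{\sqrt{p_n(1-p_n)}}$, and $\lim_{n\to\infty} n^2 c_n = \epsilon \in [0, \kappa/2]$. Set $r^{(n)} = \log(1 + \kappa^{(n)}/2 + \sqrt{\kappa^{(n)} + (\kappa^{(n)})^2/4})$. Then $\lim_{n\to\infty}\left(\frac{\cosh(n r^{(n)}) - \cosh\left(\frac{n}{2}\log\frac{p_n}{1-p_n}\right)}{\cosh(n r^{(n)})}\right)^{\alpha} = \left(\frac{\cosh\sqrt{\kappa} - \cosh\sqrt{\kappa - 2\epsilon}}{\cosh\sqrt{\kappa}}\right)^{\alpha}$ for any fixed $\alpha > 0$. -/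

import Mathlib

open Real Filter

lemma nlog_aux (a : ℕ → ℝ) (L : ℝ) (ha : ∀ n, 0 ≤ a n)
    (h : Tendsto (fun n : ℕ => (n : ℝ) * a n) atTop (nhds L)) :
    Tendsto (fun n : ℕ => (n : ℝ) * Real.log (1 + a n)) atTop (nhds L) ∧
    Tendsto (fun n : ℕ => (n : ℝ) * Real.log (1 - a n)) atTop (nhds (-L)) := by
  have hinv : Tendsto (fun n : ℕ => ((n : ℝ))⁻¹) atTop (nhds 0) :=
    tendsto_inv_atTop_zero.comp tendsto_natCast_atTop_atTop
  have ha0 : Tendsto a atTop (nhds 0) := by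
    have := h.mul hinv
    rw [mul_zero] at this
    refine this.congr' ?_
    filter_upwards [eventually_ge_atTop 1] with n hn
    have : (n : ℝ) ≠ 0 := by positivity
    field_simp
  have hsmall : ∀ᶠ n in atTop, a n < 1/2 := ha0.eventually_lt_const (by norm_num)
  have hbound : ∀ᶠ n in atTop, |Real.log (1 + a n) - a n| ≤ 2 * (a n)^2 ∧
      |Real.log (1 - a n) + a n| ≤ 2 * (a n)^2 := by
    filter_upwards [hsmall] with n hn
    have h0 := ha n
    have habs : |a n| < 1 := by rw [abs_of_nonneg h0]; linarith
    have habs' : |(-(a n))| < 1 := by rwa [abs_neg]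
    have h1 := Real.abs_log_sub_add_sum_range_le habs 1
    have h2 := Real.abs_log_sub_add_sum_range_le habs' 1
    simp [Finset.sum_range_one] at h1 h2
    rw [abs_of_nonneg h0] at h1 h2
    have hd : (1:ℝ)/2 ≤ 1 - a n := by linarith
    have hq : a n ^ 2 / (1 - a n) ≤ 2 * a n ^ 2 := by
      rw [div_le_iff₀ (by linarith)]; nlinarith
    constructor
    · calc |Real.log (1 + a n) - a n| = |-a n + Real.log (1 + a n)| := by
            rw [sub_eq_neg_add]
      _ ≤ a n ^ 2 / (1 - a n) := h2
      _ ≤ 2 * a n ^ 2 := hq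
    · calc |Real.log (1 - a n) + a n| = |a n + Real.log (1 - a n)| := by rw [add_comm]
      _ ≤ a n ^ 2 / (1 - a n) := h1
      _ ≤ 2 * a n ^ 2 := hq
  have hsq : Tendsto (fun n : ℕ => 2 * ((n : ℝ) * a n) * a n) atTop (nhds 0) := by
    have := ((h.const_mul 2).mul ha0)
    simpa using this
  have herr1 : Tendsto (fun n : ℕ => (n : ℝ) * (Real.log (1 + a n) - a n)) atTop (nhds 0) := by
    apply squeeze_zero_norm' _ hsq
    filter_upwards [hbound, eventually_ge_atTop 1] with n hb hn
    have hn0 : (0:ℝ) ≤ (n : ℝ) := by positivity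
    rw [Real.norm_eq_abs, abs_mul, abs_of_nonneg hn0]
    calc (n : ℝ) * |Real.log (1 + a n) - a n| ≤ (n : ℝ) * (2 * (a n)^2) := by
          exact mul_le_mul_of_nonneg_left hb.1 hn0
    _ = 2 * ((n : ℝ) * a n) * a n := by ring
  have herr2 : Tendsto (fun n : ℕ => (n : ℝ) * (Real.log (1 - a n) + a n)) atTop (nhds 0) := by
    apply squeeze_zero_norm' _ hsq
    filter_upwards [hbound, eventually_ge_atTop 1] with n hb hn
    have hn0 : (0:ℝ) ≤ (n : ℝ) := by positivity
    rw [Real.norm_eq_abs, abs_mul, abs_of_nonneg hn0]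
    calc (n : ℝ) * |Real.log (1 - a n) + a n| ≤ (n : ℝ) * (2 * (a n)^2) := by
          exact mul_le_mul_of_nonneg_left hb.2 hn0
    _ = 2 * ((n : ℝ) * a n) * a n := by ring
  constructor
  · have := h.add herr1
    rw [add_zero] at this
    refine this.congr fun n => by ring
  · have := herr2.sub h
    rw [zero_sub] at this
    refine this.congr fun n => by ring

/-- Limit in Lemma 4.3: probability that no loop covers the whole circle. -/
theorem cover_prob_limit (κ ε α : ℝ) (hκ : 0 < κ) (hε0 : 0 ≤ ε)
    (hεκ : ε ≤ κ / 2) (hα : 0 < α) (p c κseq r : ℕ → ℝ)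
    (hp : ∀ n, p n ∈ Set.Ioo (0 : ℝ) 1) (hc : ∀ n, 0 < c n)
    (hκdef : ∀ n, κseq n =
      (1 + c n - 2 * Real.sqrt (p n * (1 - p n))) / Real.sqrt (p n * (1 - p n)))
    (hκlim : Tendsto (fun n : ℕ => (n : ℝ) ^ 2 * κseq n) atTop (nhds κ))
    (hclim : Tendsto (fun n : ℕ => (n : ℝ) ^ 2 * c n) atTop (nhds ε))
    (hr : ∀ n, r n = Real.log (1 + κseq n / 2 +
      Real.sqrt (κseq n + (κseq n) ^ 2 / 4))) :
    Tendsto (fun n : ℕ =>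
        ((Real.cosh ((n : ℝ) * r n) -
            Real.cosh ((n : ℝ) / 2 * Real.log (p n / (1 - p n)))) /
          Real.cosh ((n : ℝ) * r n)) ^ α)
      atTop
      (nhds (((Real.cosh (Real.sqrt κ) - Real.cosh (Real.sqrt (κ - 2 * ε))) /
        Real.cosh (Real.sqrt κ)) ^ α)) := by
  have hp0 : ∀ n, 0 < p n := fun n => (hp n).1
  have hp1 : ∀ n, p n < 1 := fun n => (hp n).2
  set s : ℕ → ℝ := fun n => Real.sqrt (p n * (1 - p n)) with hsdef
  have hs0 : ∀ n, 0 < s n := fun n =>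
    Real.sqrt_pos.mpr (mul_pos (hp0 n) (by linarith [hp1 n]))
  have hs2 : ∀ n, (s n) ^ 2 = p n * (1 - p n) := fun n =>
    Real.sq_sqrt (le_of_lt (mul_pos (hp0 n) (by linarith [hp1 n])))
  have hshalf : ∀ n, s n ≤ 1/2 := by
    intro n
    have h1 : p n * (1 - p n) ≤ (1/2 : ℝ)^2 := by nlinarith [sq_nonneg (1 - 2 * p n)]
    have := Real.sqrt_le_sqrt h1
    rwa [Real.sqrt_sq (by norm_num : (0:ℝ) ≤ 1/2)] at this
  have hκpos : ∀ n, 0 < κseq n := by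
    intro n
    rw [hκdef n]
    exact div_pos (by linarith [hshalf n, hc n]) (hs0 n)
  -- inverse powers tend to zero
  have hn2 : Tendsto (fun n : ℕ => (n : ℝ)^2) atTop atTop :=
    (tendsto_pow_atTop two_ne_zero).comp tendsto_natCast_atTop_atTop
  have hinv2 : Tendsto (fun n : ℕ => ((n : ℝ)^2)⁻¹) atTop (nhds 0) :=
    tendsto_inv_atTop_zero.comp hn2
  have hinv : Tendsto (fun n : ℕ => ((n : ℝ))⁻¹) atTop (nhds 0) :=
    tendsto_inv_atTop_zero.comp tendsto_natCast_atTop_atTop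
  have hκ0 : Tendsto κseq atTop (nhds 0) := by
    have := hκlim.mul hinv2
    rw [mul_zero] at this
    refine this.congr' ?_
    filter_upwards [eventually_ge_atTop 1] with n hn
    have : (n : ℝ) ≠ 0 := by positivity
    field_simp
  have hc0 : Tendsto c atTop (nhds 0) := by
    have := hclim.mul hinv2
    rw [mul_zero] at this
    refine this.congr' ?_
    filter_upwards [eventually_ge_atTop 1] with n hn
    have : (n : ℝ) ≠ 0 := by positivity
    field_simp
  -- Step A : n * r n → √κ
  set x : ℕ → ℝ := fun n => κseq n / 2 + Real.sqrt (κseq n + (κseq n) ^ 2 / 4) with hxdef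
  have hx0 : ∀ n, 0 ≤ x n := fun n =>
    add_nonneg (by linarith [hκpos n]) (Real.sqrt_nonneg _)
  have hnx : Tendsto (fun n : ℕ => (n : ℝ) * x n) atTop (nhds (Real.sqrt κ)) := by
    have h1 : Tendsto (fun n : ℕ => (n : ℝ) * κseq n / 2) atTop (nhds 0) := by
      have := (hκlim.mul hinv).div_const 2
      rw [mul_zero, zero_div] at this
      refine this.congr' ?_
      filter_upwards [eventually_ge_atTop 1] with n hn
      have : (n : ℝ) ≠ 0 := by positivity
      field_simp
    have h2 : Tendsto (fun n : ℕ =>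
        Real.sqrt ((n : ℝ)^2 * κseq n + ((n : ℝ)^2 * κseq n) * κseq n / 4))
        atTop (nhds (Real.sqrt κ)) := by
      have hin : Tendsto (fun n : ℕ =>
          (n : ℝ)^2 * κseq n + ((n : ℝ)^2 * κseq n) * κseq n / 4) atTop
          (nhds (κ + κ * 0 / 4)) := hκlim.add ((hκlim.mul hκ0).div_const 4)
      rw [mul_zero, zero_div, add_zero] at hin
      exact (Real.continuous_sqrt.tendsto _).comp hin
    have := h1.add h2
    rw [zero_add] at this
    refine this.congr fun n => ?_
    have : (n : ℝ)^2 * κseq n + ((n : ℝ)^2 * κseq n) * κseq n / 4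
        = (n : ℝ)^2 * (κseq n + (κseq n) ^ 2 / 4) := by ring
    rw [this, Real.sqrt_mul (by positivity) _, Real.sqrt_sq (by positivity)]
    simp only [hxdef]
    ring
  have hA : Tendsto (fun n : ℕ => (n : ℝ) * r n) atTop (nhds (Real.sqrt κ)) := by
    refine ((nlog_aux x (Real.sqrt κ) hx0 hnx).1).congr fun n => ?_
    rw [hr n]
    congr 2
    simp only [hxdef]
    ring
  -- Step B : n * D n → √(κ - 2ε)
  set D : ℕ → ℝ := fun n => |1 - 2 * p n| with hDdef
  have hD2 : ∀ n, (D n)^2 = 1 - 4 * (s n)^2 := by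
    intro n
    simp only [hDdef, sq_abs]
    rw [hs2 n]; ring
  have hkey : ∀ n : ℕ, (n : ℝ)^2 * (D n)^2 =
      (4 * ((n : ℝ)^2 * κseq n) + ((n : ℝ)^2 * κseq n) * κseq n
        - 8 * ((n : ℝ)^2 * c n) - 4 * ((n : ℝ)^2 * c n) * c n) / (2 + κseq n)^2 := by
    intro n
    have h1 : s n * (2 + κseq n) = 1 + c n := by
      rw [hκdef n]
      have := (hs0 n).ne'
      change s n * (2 + (1 + c n - 2 * s n) / s n) = 1 + c n
      field_simp
      ring
    have hne : ((2 : ℝ) + κseq n)^2 ≠ 0 := (pow_pos (by linarith [hκpos n]) 2).ne'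
    rw [eq_div_iff hne, hD2 n]
    linear_combination (-4*(n:ℝ)^2*(1 + c n + s n*(2+κseq n))) * h1
  have hlim2 : Tendsto (fun n : ℕ => (n : ℝ)^2 * (D n)^2) atTop (nhds (κ - 2*ε)) := by
    have hnum : Tendsto (fun n : ℕ =>
        4 * ((n : ℝ)^2 * κseq n) + ((n : ℝ)^2 * κseq n) * κseq n
        - 8 * ((n : ℝ)^2 * c n) - 4 * ((n : ℝ)^2 * c n * c n)) atTop
        (nhds (4 * κ + κ * 0 - 8 * ε - 4 * (ε * 0))) :=
      (((hκlim.const_mul 4).add (hκlim.mul hκ0)).sub (hclim.const_mul 8)).sub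
        ((hclim.mul hc0).const_mul 4)
    have hden : Tendsto (fun n : ℕ => (2 + κseq n)^2) atTop (nhds ((2 + 0 : ℝ)^2)) :=
      (tendsto_const_nhds.add hκ0).pow 2
    have hq := hnum.div hden (by norm_num)
    have hval : (4 * κ + κ * 0 - 8 * ε - 4 * (ε * 0)) / (2 + 0 : ℝ)^2 = κ - 2*ε := by ring
    rw [hval] at hq
    refine hq.congr fun n => ?_
    simp only [Pi.div_apply]
    rw [hkey n]
    ring
  have hnD : Tendsto (fun n : ℕ => (n : ℝ) * D n) atTop (nhds (Real.sqrt (κ - 2*ε))) := by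
    have := (Real.continuous_sqrt.tendsto _).comp hlim2
    refine this.congr fun n => ?_
    show Real.sqrt ((n : ℝ)^2 * (D n)^2) = (n : ℝ) * D n
    rw [show (n : ℝ)^2 * (D n)^2 = ((n : ℝ) * D n)^2 by ring,
      Real.sqrt_sq (by positivity)]
  have hBlog := nlog_aux D (Real.sqrt (κ - 2*ε)) (fun n => abs_nonneg _) hnD
  have hB : Tendsto (fun n : ℕ =>
      (n : ℝ) / 2 * (Real.log (1 + D n) - Real.log (1 - D n))) atTop
      (nhds (Real.sqrt (κ - 2*ε))) := by
    have := (hBlog.1.sub hBlog.2).div_const 2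
    have hval : (Real.sqrt (κ - 2*ε) - -Real.sqrt (κ - 2*ε)) / 2
        = Real.sqrt (κ - 2*ε) := by ring
    rw [hval] at this
    exact this.congr fun n => by ring
  -- Step C : rewrite the cosh term
  have hcoshEq : ∀ n : ℕ, Real.cosh ((n : ℝ) / 2 * Real.log (p n / (1 - p n)))
      = Real.cosh ((n : ℝ) / 2 * (Real.log (1 + D n) - Real.log (1 - D n))) := by
    intro n
    have h1p : (0:ℝ) < 1 - p n := by linarith [hp1 n]
    have hlogdiv : Real.log (p n / (1 - p n)) = Real.log (p n) - Real.log (1 - p n) :=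
      Real.log_div (hp0 n).ne' h1p.ne'
    rcases le_or_gt (p n) (1/2) with h | h
    · have hD : D n = 1 - 2 * p n := abs_of_nonneg (by linarith)
      have e1 : 1 + D n = 2 * (1 - p n) := by rw [hD]; ring
      have e2 : 1 - D n = 2 * p n := by rw [hD]; ring
      have e3 : Real.log (1 + D n) - Real.log (1 - D n)
          = -(Real.log (p n) - Real.log (1 - p n)) := by
        rw [e1, e2, Real.log_mul two_ne_zero h1p.ne', Real.log_mul two_ne_zero (hp0 n).ne']
        ring
      rw [hlogdiv, e3, mul_neg, Real.cosh_neg]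
    · have hD : D n = 2 * p n - 1 := by
        show |1 - 2 * p n| = 2 * p n - 1
        rw [abs_of_neg (by linarith : 1 - 2 * p n < 0)]; ring
      have e1 : 1 + D n = 2 * p n := by rw [hD]; ring
      have e2 : 1 - D n = 2 * (1 - p n) := by rw [hD]; ring
      have e3 : Real.log (1 + D n) - Real.log (1 - D n)
          = Real.log (p n) - Real.log (1 - p n) := by
        rw [e1, e2, Real.log_mul two_ne_zero h1p.ne', Real.log_mul two_ne_zero (hp0 n).ne']
        ring
      rw [hlogdiv, e3]
  -- Combine
  have hcosh1 : Tendsto (fun n : ℕ => Real.cosh ((n : ℝ) * r n)) atTop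
      (nhds (Real.cosh (Real.sqrt κ))) := (Real.continuous_cosh.tendsto _).comp hA
  have hcosh2 : Tendsto (fun n : ℕ =>
      Real.cosh ((n : ℝ) / 2 * Real.log (p n / (1 - p n)))) atTop
      (nhds (Real.cosh (Real.sqrt (κ - 2*ε)))) := by
    have := (Real.continuous_cosh.tendsto _).comp hB
    exact this.congr fun n => (hcoshEq n).symm
  have hfrac := (hcosh1.sub hcosh2).div hcosh1 (Real.cosh_pos _).ne'
  exact hfrac.rpow_const (Or.inr hα.le)
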